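/- Fix an integer c ≥ 2 and let G = A + M (with A a spanning double tree and E(G) = E(A) ⊔ E(M)) be a finite graph with no c-balanced decomposition G = G1 ⊔ G2 in which A ∩ G1 and A ∩ G2 are spanning trees, chosen so that e(M) is minimal and, subject to this, |V(G)| is minimal. If e ∈ E(M) is incident to a vertex v, then v is big and d_G(v) ≡ c + 1 (mod 2). -/

import Mathlib

/-- A multigraph without loops: edges `E` with an endpoint map into unordered
pairs of vertices, no edge being a loop. -/
structure Multigraph (V : Type*) (E : Type*) where
  ends : E → Sym2 V
  loopless : ∀ e, ¬ (ends e).IsDiag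

namespace Multigraph

variable {V E : Type*}

/-- `a` and `b` are joined by an edge belonging to the edge set `S`. -/
def Adj (G : Multigraph V E) (S : Set E) (a b : V) : Prop :=
  ∃ e ∈ S, G.ends e = s(a, b)

/-- Reachability in the spanning subgraph with edge set `S`. -/
def Reachable (G : Multigraph V E) (S : Set E) (a b : V) : Prop :=
  Relation.ReflTransGen (G.Adj S) a b

/-- The spanning subgraph with edge set `S` is connected. -/
def Connected (G : Multigraph V E) (S : Set E) : Prop :=
  ∀ a b : V, G.Reachable S a b

/-- The spanning subgraph with edge set `S` is acyclic: every edge of `S`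
is a bridge of `S`. -/
def Acyclic (G : Multigraph V E) (S : Set E) : Prop :=
  ∀ e ∈ S, ∀ a b : V, G.ends e = s(a, b) → ¬ G.Reachable (S \ {e}) a b

/-- `S` is the edge set of a spanning tree: connected and acyclic. -/
def IsSpanningTree (G : Multigraph V E) (S : Set E) : Prop :=
  G.Connected S ∧ G.Acyclic S

/-- The edges of `S` incident to `v`. -/
def incEdges (G : Multigraph V E) (S : Set E) (v : V) : Set E :=
  {e ∈ S | v ∈ G.ends e}

/-- The degree of `v` in the spanning subgraph with edge set `S`. -/
noncomputable def deg (G : Multigraph V E) (S : Set E) (v : V) : ℕ :=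
  (G.incEdges S v).ncard

/-- `T1, T2` form a double tree decomposition of `G`: they partition the
edges of `G` and are both spanning trees. -/
def IsDTD (G : Multigraph V E) (T1 T2 : Set E) : Prop :=
  T1 ∪ T2 = Set.univ ∧ Disjoint T1 T2 ∧ G.IsSpanningTree T1 ∧ G.IsSpanningTree T2

/-- `G` is a double tree: the edge-disjoint union of two spanning trees. -/
def IsDoubleTree (G : Multigraph V E) : Prop :=
  ∃ T1 T2, G.IsDTD T1 T2

/-- A decomposition into two spanning subgraphs is `c`-balanced if at each
vertex the two degrees differ by at most `c`. -/
def Balanced (G : Multigraph V E) (c : ℕ) (S1 S2 : Set E) : Prop :=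
  ∀ v : V, |(G.deg S1 v : ℤ) - (G.deg S2 v : ℤ)| ≤ (c : ℤ)

end Multigraph

namespace Multigraph

variable {V E : Type*}

/-- `G` admits no `c`-balanced double tree decomposition. -/
def NoBalancedDTD (c : ℕ) (G : Multigraph V E) : Prop :=
  ¬ ∃ T1 T2 : Set E, G.IsDTD T1 T2 ∧ G.Balanced c T1 T2

/-- `v` is big: its degree exceeds `c + 2`. -/
def Big (G : Multigraph V E) (c : ℕ) (v : V) : Prop :=
  c + 2 < G.deg Set.univ v

/-- `v` is small: its degree is at most `c + 2`. -/
def Small (G : Multigraph V E) (c : ℕ) (v : V) : Prop :=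
  G.deg Set.univ v ≤ c + 2

/-- `u` and `z` are joined by a double edge. -/
def DoubleEdge (G : Multigraph V E) (u z : V) : Prop :=
  ∃ e1 e2 : E, e1 ≠ e2 ∧ G.ends e1 = s(u, z) ∧ G.ends e2 = s(u, z)

/-- `u` is a bad 3-vertex: it has degree 3, a small neighbour, and is joined
to a big vertex by a double edge. -/
def Bad3 (G : Multigraph V E) (c : ℕ) (u : V) : Prop :=
  G.deg Set.univ u = 3 ∧
  (∃ w, G.Adj Set.univ u w ∧ G.Small c w) ∧
  (∃ z, G.DoubleEdge u z ∧ G.Big c z)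

/-- `u` is a poor 3-vertex: it has degree 3 and three distinct neighbours,
two big and one small. -/
def Poor3 (G : Multigraph V E) (c : ℕ) (u : V) : Prop :=
  G.deg Set.univ u = 3 ∧
  ∃ x y s : V, x ≠ y ∧ x ≠ s ∧ y ≠ s ∧
    G.Adj Set.univ u x ∧ G.Adj Set.univ u y ∧ G.Adj Set.univ u s ∧
    G.Big c x ∧ G.Big c y ∧ G.Small c s

end Multigraph

namespace Multigraph

variable {V E : Type*}

/-- `G` admits a `c`-balanced decomposition `G1 ⊔ G2` such that `A ∩ G1` and
`A ∩ G2` are spanning trees. -/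
def GoodDecomp (G : Multigraph V E) (c : ℕ) (A : Set E) : Prop :=
  ∃ G1 G2 : Set E, G1 ∪ G2 = Set.univ ∧ Disjoint G1 G2 ∧
    G.Balanced c G1 G2 ∧
    G.IsSpanningTree (A ∩ G1) ∧ G.IsSpanningTree (A ∩ G2)

/-- The setup `G = A + M` being a counterexample: `A, M` partition the edges
of `G`, `A` is a spanning double tree, and `G` has no `c`-balanced
decomposition whose restrictions to `A` are spanning trees. -/
def AMCounterexample (G : Multigraph V E) (c : ℕ) (A M : Set E) : Prop :=
  A ∪ M = Set.univ ∧ Disjoint A M ∧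
  (∃ T1 T2 : Set E, T1 ∪ T2 = A ∧ Disjoint T1 T2 ∧
    G.IsSpanningTree T1 ∧ G.IsSpanningTree T2) ∧
  ¬ G.GoodDecomp c A

end Multigraph

namespace Multigraph

variable {V E E' : Type*}

/-- Pull back a multigraph along an edge-relabelling map. -/
def pull (G : Multigraph V E) (f : E' → E) : Multigraph V E' :=
  ⟨G.ends ∘ f, fun e => G.loopless (f e)⟩

lemma pull_adj (G : Multigraph V E) (f : E' → E) (S : Set E') (a b : V) :
    (G.pull f).Adj S a b ↔ G.Adj (f '' S) a b := by
  constructor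
  · rintro ⟨e, he, h⟩; exact ⟨f e, ⟨e, he, rfl⟩, h⟩
  · rintro ⟨_, ⟨e, he, rfl⟩, h⟩; exact ⟨e, he, h⟩

lemma pull_reach (G : Multigraph V E) (f : E' → E) (S : Set E') (a b : V) :
    (G.pull f).Reachable S a b ↔ G.Reachable (f '' S) a b := by
  constructor <;> intro h
  · exact Relation.ReflTransGen.mono (fun x y hxy => (pull_adj G f S x y).mp hxy) _ _ h
  · exact Relation.ReflTransGen.mono (fun x y hxy => (pull_adj G f S x y).mpr hxy) _ _ h

lemma pull_spanningTree (G : Multigraph V E) (f : E' → E) (hf : Function.Injective f)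
    (S : Set E') : (G.pull f).IsSpanningTree S ↔ G.IsSpanningTree (f '' S) := by
  constructor
  · rintro ⟨hcon, hac⟩
    refine ⟨fun a b => (pull_reach G f S a b).mp (hcon a b), ?_⟩
    rintro _ ⟨e, he, rfl⟩ a b hends hr
    refine hac e he a b hends ?_
    rw [pull_reach, Set.image_diff hf, Set.image_singleton]
    exact hr
  · rintro ⟨hcon, hac⟩
    refine ⟨fun a b => (pull_reach G f S a b).mpr (hcon a b), ?_⟩
    intro e he a b hends hr
    refine hac (f e) ⟨e, he, rfl⟩ a b hends ?_
    rw [← Set.image_singleton, ← Set.image_diff hf]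
    exact (pull_reach G f _ a b).mp hr

lemma pull_incEdges (G : Multigraph V E) (f : E' → E) (S : Set E') (u : V) :
    G.incEdges (f '' S) u = f '' ((G.pull f).incEdges S u) := by
  ext x
  constructor
  · rintro ⟨⟨e, he, rfl⟩, hu⟩; exact ⟨e, ⟨he, hu⟩, rfl⟩
  · rintro ⟨e, ⟨he, hu⟩, rfl⟩; exact ⟨⟨e, he, rfl⟩, hu⟩

lemma pull_deg (G : Multigraph V E) (f : E' → E) (hf : Function.Injective f)
    (S : Set E') (u : V) : (G.pull f).deg S u = G.deg (f '' S) u := by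
  unfold deg
  rw [pull_incEdges, Set.ncard_image_of_injective _ hf]

lemma incEdges_union (G : Multigraph V E) (S T : Set E) (u : V) :
    G.incEdges (S ∪ T) u = G.incEdges S u ∪ G.incEdges T u := by
  ext x
  simp only [incEdges, Set.mem_setOf_eq, Set.mem_union]
  tauto

lemma incEdges_subset (G : Multigraph V E) (S : Set E) (u : V) :
    G.incEdges S u ⊆ S := fun _ hx => hx.1

lemma deg_union [Finite E] (G : Multigraph V E) {S T : Set E} (hd : Disjoint S T) (u : V) :
    G.deg (S ∪ T) u = G.deg S u + G.deg T u := by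
  unfold deg
  rw [incEdges_union, Set.ncard_union_eq
    (hd.mono (G.incEdges_subset S u) (G.incEdges_subset T u))]

lemma deg_insert_of_mem [Finite E] (G : Multigraph V E) {S : Set E} {e : E} {u : V}
    (he : e ∉ S) (hu : u ∈ G.ends e) :
    G.deg (insert e S) u = G.deg S u + 1 := by
  have h1 : G.incEdges (insert e S) u = insert e (G.incEdges S u) := by
    ext x
    simp only [incEdges, Set.mem_setOf_eq, Set.mem_insert_iff]
    constructor
    · rintro ⟨h | h, h2⟩
      · exact Or.inl h
      · exact Or.inr ⟨h, h2⟩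
    · rintro (rfl | ⟨h, h2⟩)
      · exact ⟨Or.inl rfl, hu⟩
      · exact ⟨Or.inr h, h2⟩
  unfold deg
  rw [h1, Set.ncard_insert_of_notMem (fun hx => he (G.incEdges_subset S u hx))]

lemma deg_insert_of_not_mem (G : Multigraph V E) {S : Set E} {e : E} {u : V}
    (hu : u ∉ G.ends e) :
    G.deg (insert e S) u = G.deg S u := by
  have h1 : G.incEdges (insert e S) u = G.incEdges S u := by
    ext x
    simp only [incEdges, Set.mem_setOf_eq, Set.mem_insert_iff]
    constructor
    · rintro ⟨h | h, h2⟩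
      · exact absurd (h ▸ h2) hu
      · exact ⟨h, h2⟩
    · rintro ⟨h, h2⟩; exact ⟨Or.inr h, h2⟩
  unfold deg
  rw [h1]

lemma exists_incEdge_of_reachable (G : Multigraph V E) {S : Set E} {a b : V}
    (h : G.Reachable S a b) (hab : a ≠ b) : ∃ e ∈ S, a ∈ G.ends e := by
  rcases Relation.ReflTransGen.cases_head h with h | ⟨d, ⟨e, he, hends⟩, _⟩
  · exact absurd h hab
  · exact ⟨e, he, by rw [hends]; exact Sym2.mem_mk_left a d⟩

lemma one_le_deg_of_reachable [Finite E] (G : Multigraph V E) {S : Set E} {a b : V}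
    (h : G.Reachable S a b) (hab : a ≠ b) : 1 ≤ G.deg S a := by
  obtain ⟨e, he, hae⟩ := G.exists_incEdge_of_reachable h hab
  have : (G.incEdges S a).Nonempty := ⟨e, he, hae⟩
  exact (Set.ncard_pos (Set.toFinite _)).mpr this

end Multigraph

/-- **Theorem (Statement 13).** Let `G = A + M` be a counterexample (`c ≥ 2`)
with `e(M)` minimal and, subject to this, `|V(G)|` minimal.  Then every vertex
incident to an edge of `M` is big and has degree `≡ c + 1 (mod 2)`. -/
theorem M_edge_endpoints_big_odd (c : ℕ) (hc : 2 ≤ c) (n m : ℕ)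
    (G : Multigraph (Fin n) (Fin m)) (A M : Set (Fin m))
    (hcex : G.AMCounterexample c A M)
    (hmin : ∀ (n' m' : ℕ) (G' : Multigraph (Fin n') (Fin m'))
      (A' M' : Set (Fin m')), G'.AMCounterexample c A' M' →
      M.ncard ≤ M'.ncard ∧ (M.ncard = M'.ncard → n ≤ n')) :
    ∀ e ∈ M, ∀ v : Fin n, v ∈ G.ends e →
      G.Big c v ∧ G.deg Set.univ v % 2 = (c + 1) % 2 := by
  intro e heM v hv
  obtain ⟨hAM, hdisjAM, ⟨T1, T2, hT12, hT12d, hT1, hT2⟩, hnogood⟩ := hcex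
  have heA : e ∉ A := fun h => Set.disjoint_left.mp hdisjAM h heM
  -- the other endpoint
  set w := Sym2.Mem.other hv with hw
  have hends : G.ends e = s(v, w) := (Sym2.other_spec hv).symm
  have hvw : v ≠ w := by
    intro h
    exact G.loopless e (by rw [hends, ← h]; exact Sym2.mk_isDiag_iff.mpr rfl)
  cases m with
  | zero => exact e.elim0
  | succ m' =>
    set f : Fin m' → Fin (m' + 1) := e.succAbove with hf
    have hfi : Function.Injective f := Fin.succAbove_right_injective
    have hrange : Set.range f = {e}ᶜ := Fin.range_succAbove e
    have himage : ∀ S : Set (Fin (m' + 1)), e ∉ S → f '' (f ⁻¹' S) = S := by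
      intro S heS
      rw [Set.image_preimage_eq_inter_range, hrange,
        Set.inter_eq_self_of_subset_left (Set.subset_compl_singleton_iff.mpr heS)]
    set G' := G.pull f with hG'
    set A' := f ⁻¹' A with hA'
    have himA : f '' A' = A := himage A heA
    by_cases hgd : G'.GoodDecomp c A'
    · -- G - e has a good decomposition; extending by e must be blocked both ways
      obtain ⟨G1', G2', hu', hd', hbal', ht1', ht2'⟩ := hgd
      set G1 := f '' G1' with hG1
      set G2 := f '' G2' with hG2
      have hG1G2 : G1 ∪ G2 = {e}ᶜ := by
        rw [hG1, hG2, ← Set.image_union, hu', Set.image_univ, hrange]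
      have heG1 : e ∉ G1 := fun h => by
        have : e ∈ G1 ∪ G2 := Or.inl h
        rw [hG1G2] at this; exact this rfl
      have heG2 : e ∉ G2 := fun h => by
        have : e ∈ G1 ∪ G2 := Or.inr h
        rw [hG1G2] at this; exact this rfl
      have hdisj12 : Disjoint G1 G2 := (Set.disjoint_image_iff hfi).mpr hd'
      have htree1 : G.IsSpanningTree (A ∩ G1) := by
        have h := (G.pull_spanningTree f hfi _).mp ht1'
        rwa [Set.image_inter hfi, himA] at h
      have htree2 : G.IsSpanningTree (A ∩ G2) := by
        have h := (G.pull_spanningTree f hfi _).mp ht2'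
        rwa [Set.image_inter hfi, himA] at h
      have hbal : ∀ u, |(G.deg G1 u : ℤ) - G.deg G2 u| ≤ c := by
        intro u
        have h := hbal' u
        rwa [G.pull_deg f hfi G1', G.pull_deg f hfi G2'] at h
      -- key blocking lemma
      have key : ∀ S T : Set (Fin (m' + 1)), S ∪ T = {e}ᶜ → Disjoint S T →
          e ∉ S → e ∉ T → G.IsSpanningTree (A ∩ S) → G.IsSpanningTree (A ∩ T) →
          (∀ u, |(G.deg S u : ℤ) - G.deg T u| ≤ c) →
          ∃ u, u ∈ G.ends e ∧ (G.deg S u : ℤ) - G.deg T u = c := by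
        intro S T hST hd heS heT hts htt hb
        have hnb : ¬ G.Balanced c (insert e S) T := by
          intro hbal2
          refine hnogood ⟨insert e S, T, ?_, ?_, hbal2, ?_, htt⟩
          · rw [Set.insert_union, hST]
            ext x
            simp [eq_or_ne x e]
          · rw [Set.insert_eq]
            exact Disjoint.union_left (Set.disjoint_singleton_left.mpr heT) hd
          · rwa [Set.inter_insert_of_notMem heA]
        simp only [Multigraph.Balanced, not_forall, not_le] at hnb
        obtain ⟨u, hu⟩ := hnb
        by_cases hmem : u ∈ G.ends e
        · refine ⟨u, hmem, ?_⟩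
          rw [G.deg_insert_of_mem heS hmem] at hu
          have h2 := hb u
          rw [abs_le] at h2
          rw [lt_abs] at hu
          push_cast at hu
          omega
        · rw [G.deg_insert_of_not_mem hmem] at hu
          exact absurd (hb u) (not_le.mpr hu)
      obtain ⟨u1, hu1e, hu1⟩ := key G1 G2 hG1G2 hdisj12 heG1 heG2 htree1 htree2 hbal
      obtain ⟨u2, hu2e, hu2⟩ := key G2 G1 (by rw [Set.union_comm]; exact hG1G2)
        hdisj12.symm heG2 heG1 htree2 htree1
        (fun u => by rw [abs_sub_comm]; exact hbal u)
      have hne : u1 ≠ u2 := by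
        intro h
        rw [h] at hu1
        omega
      -- v is one of u1, u2
      rw [hends, Sym2.mem_iff] at hu1e hu2e
      have hveq : v = u1 ∨ v = u2 := by
        rcases hu1e with h1 | h1
        · exact Or.inl h1.symm
        · rcases hu2e with h2 | h2
          · exact Or.inr h2.symm
          · exact absurd (h1.trans h2.symm) hne
      have hcv : (G.deg G1 v : ℤ) - G.deg G2 v = c ∨
          (G.deg G2 v : ℤ) - G.deg G1 v = c := by
        rcases hveq with rfl | rfl
        · exact Or.inl hu1
        · exact Or.inr hu2
      -- both degrees at v are positive
      have hd1 : 1 ≤ G.deg G1 v := by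
        have h := G.one_le_deg_of_reachable (htree1.1 v w) hvw
        refine le_trans h (Set.ncard_le_ncard ?_ (Set.toFinite _))
        exact fun x hx => ⟨hx.1.2, hx.2⟩
      have hd2 : 1 ≤ G.deg G2 v := by
        have h := G.one_le_deg_of_reachable (htree2.1 v w) hvw
        refine le_trans h (Set.ncard_le_ncard ?_ (Set.toFinite _))
        exact fun x hx => ⟨hx.1.2, hx.2⟩
      -- computing the total degree
      have hsplit : G.deg Set.univ v = G.deg G1 v + G.deg G2 v + 1 := by
        have huniv : (Set.univ : Set (Fin (m' + 1))) = insert e (G1 ∪ G2) := by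
          rw [hG1G2]
          ext x
          simp [eq_or_ne x e]
        rw [huniv, G.deg_insert_of_mem (by rw [hG1G2]; simp) hv, G.deg_union hdisj12]
      constructor
      · show c + 2 < G.deg Set.univ v
        omega
      · omega
    · -- G - e is a smaller counterexample: contradiction with minimality
      exfalso
      set M' := f ⁻¹' M with hM'
      have heT1 : e ∉ T1 := fun h => heA (hT12 ▸ Or.inl h)
      have heT2 : e ∉ T2 := fun h => heA (hT12 ▸ Or.inr h)
      have hcex' : G'.AMCounterexample c A' M' := by
        refine ⟨?_, hdisjAM.preimage f, ⟨f ⁻¹' T1, f ⁻¹' T2, ?_, hT12d.preimage f, ?_, ?_⟩, hgd⟩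
        · rw [← Set.preimage_union, hAM, Set.preimage_univ]
        · rw [← Set.preimage_union, hT12]
        · rw [G.pull_spanningTree f hfi, himage T1 heT1]
          exact hT1
        · rw [G.pull_spanningTree f hfi, himage T2 heT2]
          exact hT2
      obtain ⟨hle, -⟩ := hmin _ _ G' A' M' hcex'
      have him : f '' M' = M \ {e} := by
        rw [hM', Set.image_preimage_eq_inter_range, hrange, ← Set.diff_eq]
      have hcard : M'.ncard = (M \ {e}).ncard := by
        rw [← him, Set.ncard_image_of_injective _ hfi]
      have hlt : (M \ {e}).ncard < M.ncard :=
        Set.ncard_diff_singleton_lt_of_mem heM (Set.toFinite M)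
      omega
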